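/- Let (X, τ) be a real topological vector space, F : X → [-∞,+∞], and let Φ : [-∞,+∞] → ℝ be continuous and strictly increasing with values in a compact interval [a,b]. Then: (i) Γ_τ(Φ∘F) = Φ∘Γ_τ(F); (ii) (Φ∘F)^{lc} = Φ∘(F^{lc}); (iii) (Φ∘F)^{lslc} = Φ∘(F^{lslc}), where each equality holds pointwise on X. -/

import Mathlib

open Filter Topology

variable {X : Type*}

/-- A function into the extended reals is level convex if along segments its value
is at most the maximum of the values at the endpoints. -/
def LevelConvex [AddCommGroup X] [Module ℝ X] (F : X → EReal) : Prop :=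
  ∀ x y : X, ∀ t : ℝ, 0 < t → t < 1 →
    F (t • x + (1 - t) • y) ≤ max (F x) (F y)

/-- The lower semicontinuous envelope `Γ_τ(F)`: the pointwise supremum of all
lower semicontinuous functions below `F`. -/
noncomputable def lscEnv [TopologicalSpace X] (F : X → EReal) : X → EReal :=
  fun x => ⨆ G : {G : X → EReal // LowerSemicontinuous G ∧ G ≤ F}, (G : X → EReal) x

/-- The level convex envelope `F^{lc}`: the pointwise supremum of all level convex
functions below `F`. -/
noncomputable def lcEnv [AddCommGroup X] [Module ℝ X] (F : X → EReal) : X → EReal :=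
  fun x => ⨆ G : {G : X → EReal // LevelConvex G ∧ G ≤ F}, (G : X → EReal) x

/-- The lower semicontinuous level convex envelope `F^{lslc}`: the pointwise supremum
of all functions below `F` which are both lower semicontinuous and level convex. -/
noncomputable def lslcEnv [TopologicalSpace X] [AddCommGroup X] [Module ℝ X]
    (F : X → EReal) : X → EReal :=
  fun x => ⨆ G : {G : X → EReal // LowerSemicontinuous G ∧ LevelConvex G ∧ G ≤ F},
    (G : X → EReal) x

section Aux

variable (Φ : EReal → ℝ)

/-- `Φ` followed by the coercion `ℝ → EReal`. -/
noncomputable def psiAux : EReal → EReal := fun z => ((Φ z : ℝ) : EReal)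

/-- A generalized inverse of `psiAux Φ`. -/
noncomputable def phiInvAux : EReal → EReal :=
  fun w => sSup {z : EReal | psiAux Φ z ≤ w}

variable {Φ}

lemma psiAux_cont (hcont : Continuous Φ) : Continuous (psiAux Φ) :=
  continuous_coe_real_ereal.comp hcont

lemma psiAux_mono (hmono : StrictMono Φ) : Monotone (psiAux Φ) := by
  intro u v huv
  simp only [psiAux, EReal.coe_le_coe_iff]
  exact hmono.monotone huv

lemma psiAux_strictMono (hmono : StrictMono Φ) : StrictMono (psiAux Φ) := by
  intro u v huv
  simp only [psiAux, EReal.coe_lt_coe_iff]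
  exact hmono huv

lemma phiInvAux_mono : Monotone (phiInvAux Φ) := by
  intro u v huv
  exact sSup_le_sSup fun z hz => le_trans hz huv

lemma phiInvAux_le (hmono : StrictMono Φ) {w z : EReal} (h : w ≤ psiAux Φ z) :
    phiInvAux Φ w ≤ z := by
  apply sSup_le
  intro z' hz'
  have : psiAux Φ z' ≤ psiAux Φ z := le_trans hz' h
  exact ((psiAux_strictMono hmono).le_iff_le).mp this

lemma le_psiAux_phiInvAux (hcont : Continuous Φ) (hmono : StrictMono Φ)
    {w : EReal} (hw : w ≤ psiAux Φ ⊤) : w ≤ psiAux Φ (phiInvAux Φ w) := by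
  by_cases hb : psiAux Φ ⊥ ≤ w
  · -- w lies in the range interval; use the intermediate value theorem
    have hwbot : w ≠ ⊥ := by
      intro h; rw [h] at hb
      exact (EReal.bot_lt_coe (Φ ⊥)).not_ge hb
    have hwtop : w ≠ ⊤ := by
      intro h; rw [h] at hw
      exact ((EReal.coe_lt_top (Φ ⊤)).not_ge) hw
    obtain ⟨r, hr⟩ : ∃ r : ℝ, w = (r : EReal) := ⟨w.toReal, (EReal.coe_toReal hwtop hwbot).symm⟩
    have hr1 : Φ ⊥ ≤ r := by
      rw [hr] at hb; simp only [psiAux, EReal.coe_le_coe_iff] at hb; exact hb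
    have hr2 : r ≤ Φ ⊤ := by
      rw [hr] at hw; simp only [psiAux, EReal.coe_le_coe_iff] at hw; exact hw
    obtain ⟨z, _, hz⟩ := intermediate_value_Icc (le_top : (⊥ : EReal) ≤ ⊤)
      hcont.continuousOn ⟨hr1, hr2⟩
    have hzw : psiAux Φ z = w := by rw [hr]; exact_mod_cast congrArg _ hz
    have hzS : z ∈ {z : EReal | psiAux Φ z ≤ w} := le_of_eq hzw
    have : z ≤ phiInvAux Φ w := le_sSup hzS
    calc w = psiAux Φ z := hzw.symm
      _ ≤ psiAux Φ (phiInvAux Φ w) := psiAux_mono hmono this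
  · push_neg at hb
    exact le_of_lt (lt_of_lt_of_le hb (psiAux_mono hmono bot_le))

lemma lt_phiInvAux_iff (hcont : Continuous Φ) (hmono : StrictMono Φ)
    {w : EReal} (hw : w ≤ psiAux Φ ⊤) (c : EReal) :
    c < phiInvAux Φ w ↔ psiAux Φ c < w := by
  constructor
  · intro h
    obtain ⟨z, hz, hcz⟩ := lt_sSup_iff.mp h
    exact lt_of_lt_of_le (psiAux_strictMono hmono hcz) hz
  · intro h
    apply lt_sSup_iff.mpr
    have hc : c < ⊤ := by
      rcases lt_or_eq_of_le (le_top : c ≤ ⊤) with h' | h'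
      · exact h'
      · exact absurd (lt_of_lt_of_le h hw) (by rw [h']; exact lt_irrefl _)
    obtain ⟨r, hr1, hr2⟩ := EReal.lt_iff_exists_real_btwn.mp h
    have hU : IsOpen {z : EReal | Φ z < r} := isOpen_lt hcont continuous_const
    have hcU : c ∈ {z : EReal | Φ z < r} := by
      simp only [psiAux, EReal.coe_lt_coe_iff] at hr1; exact hr1
    have hnb : (𝓝[>] c).NeBot := nhdsGT_neBot_of_exists_gt ⟨⊤, hc⟩
    have hmem : {z : EReal | Φ z < r} ∈ 𝓝[>] c :=
      mem_nhdsWithin_of_mem_nhds (hU.mem_nhds hcU)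
    obtain ⟨z, hz1, hz2⟩ := hnb.nonempty_of_mem (Filter.inter_mem hmem self_mem_nhdsWithin)
    refine ⟨z, ?_, hz2⟩
    have : psiAux Φ z < (r : EReal) := by
      simp only [psiAux, EReal.coe_lt_coe_iff]; exact hz1
    exact le_of_lt (lt_of_lt_of_le this (le_of_lt hr2))

variable [TopologicalSpace X] [AddCommGroup X] [Module ℝ X]

lemma levelConvex_comp_monotone {G : X → EReal} (hG : LevelConvex G)
    {f : EReal → EReal} (hf : Monotone f) : LevelConvex (fun x => f (G x)) := by
  intro x y t ht1 ht2
  calc f (G (t • x + (1 - t) • y)) ≤ f (max (G x) (G y)) := hf (hG x y t ht1 ht2)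
    _ = max (f (G x)) (f (G y)) := hf.map_max

lemma lsc_phiInvAux_comp (hcont : Continuous Φ) (hmono : StrictMono Φ)
    {H : X → EReal} (hH : LowerSemicontinuous H)
    (hle : ∀ x, H x ≤ psiAux Φ ⊤) :
    LowerSemicontinuous (fun x => phiInvAux Φ (H x)) := by
  rw [lowerSemicontinuous_iff_isOpen_preimage] at hH ⊢
  intro c
  have : (fun x => phiInvAux Φ (H x)) ⁻¹' Set.Ioi c = H ⁻¹' Set.Ioi (psiAux Φ c) := by
    ext x
    simp only [Set.mem_preimage, Set.mem_Ioi]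
    exact lt_phiInvAux_iff hcont hmono (hle x) c
  rw [this]
  exact hH _

/-- The main abstract lemma: envelopes with respect to a property `P` commute with
post-composition by `Φ` (coerced to `EReal`). -/
lemma envAux_eq (hcont : Continuous Φ) (hmono : StrictMono Φ)
    (F : X → EReal) (P : (X → EReal) → Prop)
    (hbot : P fun _ => (⊥ : EReal))
    (hψ : ∀ G, P G → P fun x => psiAux Φ (G x))
    (hφ : ∀ H, P H → (∀ x, H x ≤ psiAux Φ (F x)) → P fun x => phiInvAux Φ (H x)) :
    ∀ x,
      (⨆ H : {H : X → EReal // P H ∧ H ≤ fun x => psiAux Φ (F x)}, (H : X → EReal) x)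
        = psiAux Φ (⨆ G : {G : X → EReal // P G ∧ G ≤ F}, (G : X → EReal) x) := by
  intro x
  have hne : Nonempty {G : X → EReal // P G ∧ G ≤ F} :=
    ⟨⟨fun _ => ⊥, hbot, fun _ => bot_le⟩⟩
  apply le_antisymm
  · apply iSup_le
    rintro ⟨H, hPH, hHle⟩
    have hHle' : ∀ y, H y ≤ psiAux Φ (F y) := hHle
    have hHtop : ∀ y, H y ≤ psiAux Φ ⊤ :=
      fun y => le_trans (hHle' y) (psiAux_mono hmono le_top)
    set G : X → EReal := fun y => phiInvAux Φ (H y) with hGdef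
    have hPG : P G := hφ H hPH hHle'
    have hGleF : G ≤ F := fun y => phiInvAux_le hmono (hHle' y)
    have h1 : H x ≤ psiAux Φ (G x) := le_psiAux_phiInvAux hcont hmono (hHtop x)
    have h2 : G x ≤ ⨆ G' : {G' : X → EReal // P G' ∧ G' ≤ F}, (G' : X → EReal) x :=
      le_iSup (fun G' : {G' : X → EReal // P G' ∧ G' ≤ F} => (G' : X → EReal) x)
        ⟨G, hPG, hGleF⟩
    exact le_trans h1 (psiAux_mono hmono h2)
  · have hmap : psiAux Φ (⨆ G : {G : X → EReal // P G ∧ G ≤ F}, (G : X → EReal) x)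
        = ⨆ G : {G : X → EReal // P G ∧ G ≤ F}, psiAux Φ ((G : X → EReal) x) :=
      Monotone.map_ciSup_of_continuousAt ((psiAux_cont hcont).continuousAt)
        (psiAux_mono hmono)
    rw [hmap]
    apply iSup_le
    rintro ⟨G, hPG, hGle⟩
    exact le_iSup_of_le
      ⟨fun y => psiAux Φ (G y), hψ G hPG, fun y => psiAux_mono hmono (hGle y)⟩ le_rfl

end Aux

/-- envelopes commute with composition by a continuous strictly increasing
function `Φ : [-∞,+∞] → [a,b] ⊆ ℝ`. -/
theorem stmt3 [TopologicalSpace X] [AddCommGroup X] [Module ℝ X]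
    [IsTopologicalAddGroup X] [ContinuousSMul ℝ X]
    (F : X → EReal) (a b : ℝ) (Φ : EReal → ℝ)
    (hcont : Continuous Φ) (hmono : StrictMono Φ)
    (hrange : ∀ z : EReal, Φ z ∈ Set.Icc a b) :
    (lscEnv (fun x => ((Φ (F x) : ℝ) : EReal)) = fun x => ((Φ (lscEnv F x) : ℝ) : EReal)) ∧
    (lcEnv (fun x => ((Φ (F x) : ℝ) : EReal)) = fun x => ((Φ (lcEnv F x) : ℝ) : EReal)) ∧
    (lslcEnv (fun x => ((Φ (F x) : ℝ) : EReal)) = fun x => ((Φ (lslcEnv F x) : ℝ) : EReal)) := by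
  refine ⟨?_, ?_, ?_⟩
  · funext x
    exact envAux_eq hcont hmono F LowerSemicontinuous
      lowerSemicontinuous_const
      (fun G hG => (psiAux_cont hcont).comp_lowerSemicontinuous hG (psiAux_mono hmono))
      (fun H hH hle => lsc_phiInvAux_comp hcont hmono hH
        (fun y => le_trans (hle y) (psiAux_mono hmono le_top))) x
  · funext x
    exact envAux_eq hcont hmono F LevelConvex
      (fun _ _ _ _ _ => by simp)
      (fun G hG => levelConvex_comp_monotone hG (psiAux_mono hmono))
      (fun H hH _ => levelConvex_comp_monotone hH phiInvAux_mono) x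
  · funext x
    have key := envAux_eq hcont hmono F
      (fun G => LowerSemicontinuous G ∧ LevelConvex G)
      ⟨lowerSemicontinuous_const, fun _ _ _ _ _ => by simp⟩
      (fun G hG => ⟨(psiAux_cont hcont).comp_lowerSemicontinuous hG.1 (psiAux_mono hmono),
        levelConvex_comp_monotone hG.2 (psiAux_mono hmono)⟩)
      (fun H hH hle => ⟨lsc_phiInvAux_comp hcont hmono hH.1
        (fun y => le_trans (hle y) (psiAux_mono hmono le_top)),
        levelConvex_comp_monotone hH.2 phiInvAux_mono⟩) x
    -- convert between the two (propositionally equal) subtype formulations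
    have conv : ∀ (F' : X → EReal), lslcEnv F' x
        = ⨆ G : {G : X → EReal //
            (LowerSemicontinuous G ∧ LevelConvex G) ∧ G ≤ F'}, (G : X → EReal) x := by
      intro F'
      apply le_antisymm
      · apply iSup_le
        rintro ⟨G, h1, h2, h3⟩
        exact le_iSup_of_le ⟨G, ⟨h1, h2⟩, h3⟩ le_rfl
      · apply iSup_le
        rintro ⟨G, ⟨h1, h2⟩, h3⟩
        exact le_iSup_of_le (ι := {G : X → EReal //
          LowerSemicontinuous G ∧ LevelConvex G ∧ G ≤ F'}) ⟨G, h1, h2, h3⟩ le_rfl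
    rw [conv, conv]
    exact key
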